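/- Uniqueness of the ε-transducer: if R is a prescient rival partition with H[R_0] = H[S_0] (for every input process), then, almost everywhere, R and S are related by a bijection: there exist functions f and g = f^{-1} with S_0 = f(R_0) and R_0 = g(S_0) a.e., and the equivalence relations ∼_η and ∼_ε coincide almost everywhere. -/

import Mathlib

open MeasureTheory ProbabilityTheory

/-- Shannon entropy (in nats) of the distribution of a random variable `f` under `μ`. -/
noncomputable def entropy' {Ω α : Type*} [MeasurableSpace Ω]
    (μ : Measure Ω) (f : Ω → α) : ℝ :=
  ∑' a : α, Real.negMulLog ((μ (f ⁻¹' {a})).toReal)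

/-- Superadditivity of `negMulLog` over a finite sum of nonnegative reals. -/
lemma negMulLog_sum_le {ι : Type*} (t : Finset ι) (q : ι → ℝ) (hq : ∀ i ∈ t, 0 ≤ q i) :
    Real.negMulLog (∑ i ∈ t, q i) ≤ ∑ i ∈ t, Real.negMulLog (q i) := by
  set T := ∑ i ∈ t, q i with hT
  have hT0 : 0 ≤ T := Finset.sum_nonneg hq
  rcases hT0.eq_or_lt with h0 | hpos
  · have hz : ∀ i ∈ t, q i = 0 := by
      intro i hi
      exact (Finset.sum_eq_zero_iff_of_nonneg hq).1 h0.symm i hi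
    have : ∑ i ∈ t, Real.negMulLog (q i) = 0 := by
      apply Finset.sum_eq_zero
      intro i hi; rw [hz i hi, Real.negMulLog_zero]
    rw [this, ← h0, Real.negMulLog_zero]
  · have : Real.negMulLog T = ∑ i ∈ t, (-(q i) * Real.log T) := by
      rw [Real.negMulLog, ← Finset.sum_mul, hT]
      ring_nf
      rw [Finset.sum_neg_distrib]
      ring_nf
    rw [this]
    apply Finset.sum_le_sum
    intro i hi
    rcases (hq i hi).eq_or_lt with hqi | hqi
    · simp [← hqi]
    · have hle : q i ≤ T := Finset.single_le_sum hq hi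
      have : Real.log (q i) ≤ Real.log T := Real.log_le_log hqi hle
      have := mul_le_mul_of_nonneg_left this (hq i hi)
      rw [Real.negMulLog]
      nlinarith

/-- Strict version: two distinct positive entries force strict superadditivity. -/
lemma negMulLog_sum_lt {ι : Type*} [DecidableEq ι] (t : Finset ι) (q : ι → ℝ) (hq : ∀ i ∈ t, 0 ≤ q i)
    {i j : ι} (hi : i ∈ t) (hj : j ∈ t) (hij : i ≠ j) (hqi : 0 < q i) (hqj : 0 < q j) :
    Real.negMulLog (∑ k ∈ t, q k) < ∑ k ∈ t, Real.negMulLog (q k) := by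
  set T := ∑ k ∈ t, q k with hT
  have hiT : q i < T := by
    have h1 : q i + q j ≤ T := by
      rw [hT]
      have := Finset.add_sum_erase t q hi
      have hj' : j ∈ t.erase i := Finset.mem_erase.2 ⟨hij.symm, hj⟩
      have h2 : q j ≤ ∑ k ∈ t.erase i, q k :=
        Finset.single_le_sum (fun k hk => hq k (Finset.mem_of_mem_erase hk)) hj'
      linarith
    linarith
  have hTpos : 0 < T := lt_trans hqi hiT
  have heq : Real.negMulLog T = ∑ k ∈ t, (-(q k) * Real.log T) := by
    rw [Real.negMulLog, ← Finset.sum_mul, hT]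
    ring_nf
    rw [Finset.sum_neg_distrib]
    ring_nf
  rw [heq]
  apply Finset.sum_lt_sum
  · intro k hk
    rcases (hq k hk).eq_or_lt with hqk | hqk
    · simp [← hqk]
    · have hle : q k ≤ T := Finset.single_le_sum hq hk
      have : Real.log (q k) ≤ Real.log T := Real.log_le_log hqk hle
      have := mul_le_mul_of_nonneg_left this (hq k hk)
      rw [Real.negMulLog]; nlinarith
  · refine ⟨i, hi, ?_⟩
    have : Real.log (q i) < Real.log T := Real.log_lt_log hqi hiT
    have := mul_lt_mul_of_pos_left this hqi
    rw [Real.negMulLog]; nlinarith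

/-- Uniqueness of the ε-transducer.  `S₀ = ε(Zpast)` are the causal states and
`R₀ = η(Zpast)` a prescient rival; by the Refinement Lemma there is `f` with `S₀ = f(R₀)`
almost everywhere (`hf`).  If moreover `H[R₀] = H[S₀]`, then `R` and `S` are a.e. related by a
bijection: there is `g = f⁻¹` with `R₀ = g(S₀)` a.e. and `f ∘ g`, `g ∘ f` the identity on the
a.e.-realized states, and the equivalence relations `∼_η` and `∼_ε` coincide almost
everywhere on pasts. -/
theorem epsilon_transducer_uniqueness {Ω P SA RA : Type*} [MeasurableSpace Ω]
    [MeasurableSpace P] [Fintype SA] [Fintype RA]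
    [MeasurableSpace SA] [MeasurableSingletonClass SA]
    [MeasurableSpace RA] [MeasurableSingletonClass RA]
    (μ : Measure Ω) [IsProbabilityMeasure μ]
    (Zpast : Ω → P) (eps : P → SA) (eta : P → RA)
    (hZ : Measurable Zpast) (hS : Measurable eps) (hR : Measurable eta)
    (f : RA → SA)
    (hf : ∀ᵐ ω ∂μ, eps (Zpast ω) = f (eta (Zpast ω)))
    (hH : entropy' μ (fun ω => eta (Zpast ω)) = entropy' μ (fun ω => eps (Zpast ω))) :
    ∃ g : SA → RA,
      (∀ᵐ ω ∂μ, eta (Zpast ω) = g (eps (Zpast ω)))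
      ∧ (∀ᵐ ω ∂μ, f (g (eps (Zpast ω))) = eps (Zpast ω)
          ∧ g (f (eta (Zpast ω))) = eta (Zpast ω))
      ∧ (∀ᵐ p ∂(μ.map Zpast), ∀ᵐ p' ∂(μ.map Zpast),
          (eta p = eta p' ↔ eps p = eps p')) := by
  classical
  set R0 : Ω → RA := fun ω => eta (Zpast ω) with hR0
  set S0 : Ω → SA := fun ω => eps (Zpast ω) with hS0
  have hR0m : Measurable R0 := hR.comp hZ
  have hS0m : Measurable S0 := hS.comp hZ
  set q : RA → ℝ := fun r => (μ (R0 ⁻¹' {r})).toReal with hq_def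
  set p : SA → ℝ := fun s => (μ (S0 ⁻¹' {s})).toReal with hp_def
  have hq0 : ∀ r, 0 ≤ q r := fun r => ENNReal.toReal_nonneg
  -- p s = sum of q over the fiber of f at s
  have hp_fiber : ∀ s : SA, p s = ∑ r ∈ Finset.univ.filter (fun r => f r = s), q r := by
    intro s
    have hae : S0 ⁻¹' {s} =ᵐ[μ] (fun ω => f (R0 ω)) ⁻¹' {s} := by
      rw [Filter.eventuallyEq_set]
      filter_upwards [hf] with ω hω
      simp only [Set.mem_preimage, Set.mem_singleton_iff, hS0, hR0]
      rw [hω]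
    have hunion : (fun ω => f (R0 ω)) ⁻¹' {s}
        = ⋃ r ∈ Finset.univ.filter (fun r => f r = s), R0 ⁻¹' {r} := by
      ext ω
      simp [Set.mem_preimage, Set.mem_singleton_iff, eq_comm]
    have hmeas : μ (S0 ⁻¹' {s})
        = ∑ r ∈ Finset.univ.filter (fun r => f r = s), μ (R0 ⁻¹' {r}) := by
      rw [measure_congr hae, hunion]
      apply measure_biUnion_finset
      · intro r _ r' _ hrr'
        apply Set.disjoint_left.2
        intro ω hω hω'
        exact hrr' (by
          simp only [Set.mem_preimage, Set.mem_singleton_iff] at hω hω'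
          rw [← hω, ← hω'])
      · intro r _
        exact hR0m (measurableSet_singleton r)
    rw [hp_def]
    simp only
    rw [hmeas, ENNReal.toReal_sum (fun r _ => measure_ne_top μ _)]
  -- entropies as finite sums
  have hHR : entropy' μ R0 = ∑ r, Real.negMulLog (q r) := by
    rw [entropy', tsum_fintype]
  have hHS : entropy' μ S0 = ∑ s, Real.negMulLog (p s) := by
    rw [entropy', tsum_fintype]
  -- key uniqueness: each fiber has at most one positive-mass element
  have hUniq : ∀ r r' : RA, f r = f r' → 0 < q r → 0 < q r' → r = r' := by
    intro r r' hfr hqr hqr'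
    by_contra hne
    have hsum : ∑ s : SA, (∑ k ∈ Finset.univ.filter (fun k => f k = s), Real.negMulLog (q k)
        - Real.negMulLog (∑ k ∈ Finset.univ.filter (fun k => f k = s), q k)) = 0 := by
      rw [Finset.sum_sub_distrib]
      have h1 : ∑ s : SA, ∑ k ∈ Finset.univ.filter (fun k => f k = s), Real.negMulLog (q k)
          = ∑ k, Real.negMulLog (q k) := Finset.sum_fiberwise _ _ _
      have h2 : ∑ s : SA, Real.negMulLog (∑ k ∈ Finset.univ.filter (fun k => f k = s), q k)
          = ∑ s, Real.negMulLog (p s) := by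
        apply Finset.sum_congr rfl
        intro s _
        rw [hp_fiber s]
      rw [h1, h2, ← hHR, ← hHS]
      rw [hR0] at hH
      rw [hS0] at hH
      rw [hH]
      ring
    have hnonneg : ∀ s ∈ Finset.univ, 0 ≤
        ∑ k ∈ Finset.univ.filter (fun k => f k = s), Real.negMulLog (q k)
        - Real.negMulLog (∑ k ∈ Finset.univ.filter (fun k => f k = s), q k) := by
      intro s _
      have := negMulLog_sum_le (Finset.univ.filter (fun k => f k = s)) q
        (fun i _ => hq0 i)
      linarith
    have hzero := (Finset.sum_eq_zero_iff_of_nonneg hnonneg).1 hsum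
    have hs := hzero (f r) (Finset.mem_univ _)
    have hstrict := negMulLog_sum_lt (Finset.univ.filter (fun k => f k = f r)) q
      (fun i _ => hq0 i)
      (i := r) (j := r')
      (by simp) (by simp [hfr.symm]) hne hqr hqr'
    linarith
  -- nonemptiness of RA
  have hΩne : Nonempty Ω := by
    by_contra h
    rw [not_nonempty_iff] at h
    have h1 : μ Set.univ = 1 := measure_univ
    rw [Set.univ_eq_empty_iff.2 h, measure_empty] at h1
    exact zero_ne_one h1
  have hRAne : Nonempty RA := ⟨eta (Zpast hΩne.some)⟩
  -- definition of g
  set g : SA → RA := fun s =>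
    if h : ∃ r, f r = s ∧ 0 < q r then h.choose else Classical.arbitrary RA with hg_def
  have hg : ∀ r : RA, 0 < q r → g (f r) = r := by
    intro r hqr
    have hex : ∃ r', f r' = f r ∧ 0 < q r' := ⟨r, rfl, hqr⟩
    rw [hg_def]
    simp only [dif_pos hex]
    exact hUniq _ _ hex.choose_spec.1 hex.choose_spec.2 hqr
  -- almost everywhere, the realized rival state has positive mass
  have haeq : ∀ᵐ ω ∂μ, 0 < q (R0 ω) := by
    have hnull : μ {ω | ¬ 0 < q (R0 ω)} = 0 := by
      have hsub : {ω | ¬ 0 < q (R0 ω)}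
          ⊆ ⋃ r ∈ Finset.univ.filter (fun r => ¬ 0 < q r), R0 ⁻¹' {r} := by
        intro ω hω
        simp only [Set.mem_setOf_eq] at hω
        exact Set.mem_biUnion (Finset.mem_filter.2 ⟨Finset.mem_univ _, hω⟩) rfl
      refine measure_mono_null hsub ?_
      refine (measure_biUnion_null_iff (Finset.countable_toSet _)).2 ?_
      intro r hr
      simp only [Finset.coe_filter, Set.mem_setOf_eq] at hr
      have : q r = 0 := le_antisymm (not_lt.1 hr.2) (hq0 r)
      rw [hq_def] at this
      simp only at this
      exact (ENNReal.toReal_eq_zero_iff _).1 this |>.resolve_right (measure_ne_top μ _)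
    exact hnull
  have hmain : ∀ᵐ ω ∂μ, eta (Zpast ω) = g (eps (Zpast ω)) := by
    filter_upwards [hf, haeq] with ω h1 h2
    have h3 : g (f (eta (Zpast ω))) = eta (Zpast ω) := hg _ h2
    rw [h1]
    exact h3.symm
  refine ⟨g, hmain, ?_, ?_⟩
  · filter_upwards [hf, hmain] with ω h1 h2
    constructor
    · rw [← h2, ← h1]
    · rw [← h1, ← h2]
  · -- transfer to the pushforward measure
    have hEmeas : MeasurableSet {x : P | eps x = f (eta x)} := by
      have hfm : Measurable (fun x : P => f (eta x)) :=
        (measurable_of_countable f).comp hR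
      exact measurableSet_eq_fun hS hfm
    have hFmeas : MeasurableSet {x : P | eta x = g (eps x)} := by
      have hgm : Measurable (fun x : P => g (eps x)) :=
        (measurable_of_countable g).comp hS
      exact measurableSet_eq_fun hR hgm
    have hE : ∀ᵐ x ∂(μ.map Zpast), eps x = f (eta x) :=
      (ae_map_iff hZ.aemeasurable hEmeas).2 hf
    have hF : ∀ᵐ x ∂(μ.map Zpast), eta x = g (eps x) :=
      (ae_map_iff hZ.aemeasurable hFmeas).2 hmain
    filter_upwards [hE, hF] with x hx1 hx2
    filter_upwards [hE, hF] with y hy1 hy2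
    constructor
    · intro h
      rw [hx1, hy1, h]
    · intro h
      rw [hx2, hy2, h]
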